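/- Let d≥1, λ∈(0,1) and a∈Ω. Let u:ℤ^d→ℝ be absolutely summable (u∈ℓ¹(ℤ^d)), let f:ℤ^d→ℝ be absolutely summable, and suppose ∇*(a∇u)(x)=f(x) for all x∈ℤ^d. For M>0 define the truncation v_M(x):=min{max{u(x),0},M}. Then λ Σ_{e∈𝔼^d} (∇v_M(e))² ≤ Σ_{x∈ℤ^d} v_M(x) f(x) ≤ M Σ_{x∈ℤ^d} |f(x)| (in particular all these sums converge). -/

import Mathlib

open MeasureTheory Filter

/-- Vertices of the lattice `ℤ^d`. -/
abbrev V (d : ℕ) : Type := Fin d → ℤ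

/-- Edges of `ℤ^d`: the pair `(x, i)` represents the edge `[x, x + eᵢ]`. -/
abbrev Edge (d : ℕ) : Type := V d × Fin d

/-- The `i`-th standard basis vector of `ℤ^d`. -/
def unitV (d : ℕ) (i : Fin d) : V d := fun j => if j = i then 1 else 0

/-- Discrete gradient of a scalar field along an edge:
`∇ζ([x,x+eᵢ]) = ζ(x+eᵢ) - ζ(x)`. -/
noncomputable def dGrad {d : ℕ} (ζ : V d → ℝ) (e : Edge d) : ℝ :=
  ζ (e.1 + unitV d e.2) - ζ e.1

/-- The discrete elliptic operator `(∇*(a∇u))(x)`. -/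
noncomputable def aDiv {d : ℕ} (a : Edge d → ℝ) (u : V d → ℝ) (x : V d) : ℝ :=
  ∑ i : Fin d, (a (x - unitV d i, i) * (u x - u (x - unitV d i))
    - a (x, i) * (u (x + unitV d i) - u x))

/-- `a ∈ Ω = [λ,1]^{𝔼^d}`: a uniformly elliptic coefficient field. -/
def IsCoeff {d : ℕ} (lam : ℝ) (a : Edge d → ℝ) : Prop :=
  ∀ e, a e ∈ Set.Icc lam 1

/-- Euclidean norm of a lattice vector. -/
noncomputable def vnorm {d : ℕ} (x : V d) : ℝ :=
  Real.sqrt (∑ j, ((x j : ℝ)) ^ 2)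

/-- Midpoint (in `ℝ^d`) of an edge. -/
noncomputable def eMid {d : ℕ} (e : Edge d) : Fin d → ℝ :=
  fun j => (e.1 j : ℝ) + (if j = e.2 then (1 : ℝ)/2 else 0)

/-- Distance `|e - y|` from the midpoint of the edge `e - y` to the origin,
i.e. the distance from the midpoint of `e` to the vertex `y`. -/
noncomputable def edistEV {d : ℕ} (e : Edge d) (y : V d) : ℝ :=
  Real.sqrt (∑ j, (eMid e j - (y j : ℝ)) ^ 2)

/-- Distance `|e - b|` between the midpoints of the edges `e` and `b`. -/
noncomputable def edistEE {d : ℕ} (e b : Edge d) : ℝ :=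
  Real.sqrt (∑ j, (eMid e j - eMid b j) ^ 2)

/-- The edge `e` shifted by the vector `z`. -/
def shiftE {d : ℕ} (e : Edge d) (z : V d) : Edge d := (e.1 + z, e.2)

/-- Stationarity of an ensemble: for every `z ∈ ℤ^d`, the shifted field `a(·+z)`
has the same law as `a`. -/
def Stationary {d : ℕ} (μ : Measure (Edge d → ℝ)) : Prop :=
  ∀ z : V d, Measure.map (fun a : Edge d → ℝ => fun e => a (shiftE e z)) μ = μ

/-- `g` is the elliptic Green function of the coefficient field `a`:
it decays at infinity and solves `∇*(a∇g(·,y))(x) = δ(x-y)`. -/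
def IsGreenOf {d : ℕ} (a : Edge d → ℝ) (g : V d → V d → ℝ) : Prop :=
  (∀ y, Tendsto (fun x => g x y) cofinite (nhds 0)) ∧
  (∀ x y, aDiv a (fun x' => g x' y) x = if x = y then (1 : ℝ) else 0)

/-- `G` is the (a-dependent) elliptic Green function: Borel measurable in `a`,
and for each `a ∈ Ω` the Green function of `a`. -/
def IsEllGreen {d : ℕ} (lam : ℝ) (G : (Edge d → ℝ) → V d → V d → ℝ) : Prop :=
  (∀ x y, Measurable fun a => G a x y) ∧
  (∀ a, IsCoeff lam a → IsGreenOf a (G a))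

/-- Derivative of the elliptic Green function in its first variable along the edge `e`. -/
noncomputable def gradG1 {d : ℕ} (G : (Edge d → ℝ) → V d → V d → ℝ)
    (a : Edge d → ℝ) (e : Edge d) (y : V d) : ℝ :=
  dGrad (fun x => G a x y) e

/-- Mixed second derivative of the elliptic Green function: first variable along `e`,
second variable along `b`. -/
noncomputable def gradG2 {d : ℕ} (G : (Edge d → ℝ) → V d → V d → ℝ)
    (a : Edge d → ℝ) (e b : Edge d) : ℝ :=
  dGrad (fun x => dGrad (fun y => G a x y) b) e

/-- `G` is the (a-dependent) parabolic Green function: Borel measurable in `a`, bounded,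
with initial datum `δ(x-y)`, solving `d/dt G(t,x,y) = -(∇*(a∇G(t,·,y)))(x)` for `t > 0`. -/
def IsParGreen {d : ℕ} (lam : ℝ) (G : (Edge d → ℝ) → ℝ → V d → V d → ℝ) : Prop :=
  (∀ t x y, Measurable fun a => G a t x y) ∧
  (∀ a, IsCoeff lam a → ∃ M : ℝ, ∀ t x y, 0 ≤ t → |G a t x y| ≤ M) ∧
  (∀ a, IsCoeff lam a → ∀ x y, G a 0 x y = if x = y then (1 : ℝ) else 0) ∧
  (∀ a, IsCoeff lam a → ∀ t : ℝ, 0 < t → ∀ x y,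
    HasDerivAt (fun s => G a s x y) (-(aDiv a (fun x' => G a t x' y) x)) t)

/-- `η(t,r) = r·arsinh(r/t) − (√(t²+r²) − t)`. -/
noncomputable def eta (t r : ℝ) : ℝ :=
  r * Real.arsinh (r / t) - (Real.sqrt (t ^ 2 + r ^ 2) - t)

/-- Shift bijection on edges: `(x,i) ↦ (x+eᵢ, i)`. -/
def edgeShiftEquiv (d : ℕ) : Edge d ≃ Edge d where
  toFun e := (e.1 + unitV d e.2, e.2)
  invFun e := (e.1 - unitV d e.2, e.2)
  left_inv e := by simp
  right_inv e := by simp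

/-- energy estimate for the truncation `v_M = min(max(u,0),M)`:
`λ Σ_e (∇v_M(e))² ≤ Σ_x v_M(x) f(x) ≤ M Σ_x |f(x)|`. -/
theorem truncation_energy_estimate
    (d : ℕ) (hd : 1 ≤ d) (lam : ℝ) (hlam : lam ∈ Set.Ioo (0 : ℝ) 1)
    (a : Edge d → ℝ) (ha : IsCoeff lam a)
    (u f : V d → ℝ)
    (hu : Summable fun x => |u x|) (hf : Summable fun x => |f x|)
    (heq : ∀ x, aDiv a u x = f x)
    (M : ℝ) (hM : 0 < M)
    (vM : V d → ℝ) (hvM : ∀ x, vM x = min (max (u x) 0) M) :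
    Summable (fun e : Edge d => (dGrad vM e) ^ 2) ∧
    Summable (fun x : V d => vM x * f x) ∧
    lam * (∑' e : Edge d, (dGrad vM e) ^ 2) ≤ (∑' x : V d, vM x * f x) ∧
    (∑' x : V d, vM x * f x) ≤ M * ∑' x : V d, |f x| := by
  classical
  -- the clamp function
  set c : ℝ → ℝ := fun r => min (max r 0) M with hc
  have hvc : ∀ x, vM x = c (u x) := hvM
  have hc0 : ∀ r, 0 ≤ c r := fun r => le_min (le_max_right _ _) hM.le
  have hcM : ∀ r, c r ≤ M := fun r => min_le_right _ _
  have hlip : ∀ s t : ℝ, t ≤ s → c s - c t ≤ s - t ∧ 0 ≤ c s - c t := by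
    intro s t h
    simp only [hc, min_def, max_def]
    split_ifs <;> constructor <;> linarith
  have hquad : ∀ s t : ℝ, (c s - c t) ^ 2 ≤ (c s - c t) * (s - t) := by
    intro s t
    rcases le_total t s with h | h
    · obtain ⟨h1, h2⟩ := hlip s t h; nlinarith
    · obtain ⟨h1, h2⟩ := hlip t s h; nlinarith
  -- summability of |∇u| over edges
  have h1 : Summable fun e : Edge d => |u e.1| := by
    rw [summable_prod_of_nonneg (fun p => abs_nonneg _)]
    refine ⟨fun x => Summable.of_finite, ?_⟩
    have : (fun x : V d => ∑' _ : Fin d, |u x|) = fun x => (d : ℝ) * |u x| := by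
      funext x
      rw [tsum_fintype]
      simp [Finset.sum_const, mul_comm]
    rw [this]
    exact hu.mul_left _
  have h2 : Summable fun e : Edge d => |u (e.1 + unitV d e.2)| := by
    rw [summable_prod_of_nonneg (fun p => abs_nonneg _)]
    refine ⟨fun x => Summable.of_finite, ?_⟩
    have : (fun x : V d => ∑' i : Fin d, |u (x + unitV d i)|)
        = fun x => ∑ i : Fin d, |u (x + unitV d i)| := by
      funext x; rw [tsum_fintype]
    rw [this]
    refine summable_sum (fun i _ => ?_)
    exact hu.comp_injective (add_left_injective (unitV d i))
  have hgu : Summable fun e : Edge d => |dGrad u e| := by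
    refine Summable.of_nonneg_of_le (fun e => abs_nonneg _) (fun e => ?_) (h2.add h1)
    exact abs_sub _ _
  -- gradient facts for vM
  have hdg : ∀ e : Edge d, dGrad vM e = c (u (e.1 + unitV d e.2)) - c (u e.1) := by
    intro e; simp [dGrad, hvc]
  have hsq : ∀ e : Edge d, (dGrad vM e) ^ 2 ≤ dGrad vM e * dGrad u e := by
    intro e; rw [hdg e]; exact hquad _ _
  have habs : ∀ e : Edge d, |dGrad vM e| ≤ M := by
    intro e
    rw [hdg e, abs_le]
    constructor <;> [linarith [hc0 (u (e.1 + unitV d e.2)), hcM (u e.1)];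
      linarith [hc0 (u e.1), hcM (u (e.1 + unitV d e.2))]]
  have haM : ∀ e : Edge d, |a e| ≤ 1 := by
    intro e
    rw [abs_le]
    exact ⟨by linarith [(ha e).1, hlam.1], (ha e).2⟩
  -- summability of all relevant edge sums
  have hMgu : Summable fun e : Edge d => M * |dGrad u e| := hgu.mul_left M
  have S1 : Summable fun e : Edge d => (dGrad vM e) ^ 2 := by
    refine Summable.of_nonneg_of_le (fun e => sq_nonneg _) (fun e => ?_) hMgu
    calc (dGrad vM e) ^ 2 ≤ dGrad vM e * dGrad u e := hsq e
      _ ≤ |dGrad vM e * dGrad u e| := le_abs_self _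
      _ = |dGrad vM e| * |dGrad u e| := abs_mul _ _
      _ ≤ M * |dGrad u e| := by
          exact mul_le_mul_of_nonneg_right (habs e) (abs_nonneg _)
  have hvMabs : ∀ x, |vM x| ≤ M := by
    intro x
    rw [hvc x, abs_of_nonneg (hc0 _)]
    exact hcM _
  have hbound : ∀ (w : Edge d → ℝ), (∀ e, |w e| ≤ M) →
      Summable fun e : Edge d => w e * (a e * dGrad u e) := by
    intro w hw
    refine Summable.of_norm_bounded hMgu (fun e => ?_)
    rw [Real.norm_eq_abs, abs_mul, abs_mul]
    have h1a : |a e| * |dGrad u e| ≤ 1 * |dGrad u e| :=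
      mul_le_mul_of_nonneg_right (haM e) (abs_nonneg _)
    calc |w e| * (|a e| * |dGrad u e|) ≤ M * (|a e| * |dGrad u e|) := by
          exact mul_le_mul_of_nonneg_right (hw e) (by positivity)
      _ ≤ M * (1 * |dGrad u e|) := mul_le_mul_of_nonneg_left h1a hM.le
      _ = M * |dGrad u e| := by ring
  have T1 : Summable fun e : Edge d => vM (e.1 + unitV d e.2) * (a e * dGrad u e) :=
    hbound _ (fun e => hvMabs _)
  have T2 : Summable fun e : Edge d => vM e.1 * (a e * dGrad u e) :=
    hbound _ (fun e => hvMabs _)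
  have T3 : Summable fun e : Edge d => dGrad vM e * (a e * dGrad u e) :=
    hbound _ habs
  -- the reindexed version of T1
  have hfun : (fun e : Edge d =>
        vM e.1 * (a (e.1 - unitV d e.2, e.2) * dGrad u (e.1 - unitV d e.2, e.2)))
      = (fun e : Edge d => vM (e.1 + unitV d e.2) * (a e * dGrad u e))
          ∘ ⇑(edgeShiftEquiv d).symm := by
    funext e
    simp only [Function.comp_apply, edgeShiftEquiv, Equiv.coe_fn_symm_mk]
    rw [sub_add_cancel]
  have T1' : Summable fun e : Edge d =>
      vM e.1 * (a (e.1 - unitV d e.2, e.2) * dGrad u (e.1 - unitV d e.2, e.2)) := by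
    rw [hfun]
    exact ((edgeShiftEquiv d).symm.summable_iff).mpr T1
  have Svf : Summable fun x : V d => vM x * f x := by
    refine Summable.of_norm_bounded (hf.mul_left M) (fun x => ?_)
    rw [Real.norm_eq_abs, abs_mul]
    exact mul_le_mul_of_nonneg_right (hvMabs x) (abs_nonneg _)
  -- summation by parts
  have key : (∑' x : V d, vM x * f x)
      = ∑' e : Edge d, dGrad vM e * (a e * dGrad u e) := by
    have hA : ∀ x : V d, vM x * f x = ∑ i : Fin d,
        (vM x * (a (x - unitV d i, i) * dGrad u (x - unitV d i, i))
          - vM x * (a (x, i) * dGrad u (x, i))) := by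
      intro x
      rw [← heq x, aDiv, Finset.mul_sum]
      refine Finset.sum_congr rfl (fun i _ => ?_)
      have : dGrad u (x - unitV d i, i) = u x - u (x - unitV d i) := by
        show u ((x - unitV d i) + unitV d i) - _ = _
        rw [sub_add_cancel]
      rw [this]
      show vM x * _ = _
      rw [dGrad]
      ring
    have hSum : Summable fun p : Edge d =>
        vM p.1 * (a (p.1 - unitV d p.2, p.2) * dGrad u (p.1 - unitV d p.2, p.2))
          - vM p.1 * (a p * dGrad u p) := T1'.sub T2
    calc (∑' x : V d, vM x * f x)
        = ∑' x : V d, ∑' i : Fin d,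
            (vM x * (a (x - unitV d i, i) * dGrad u (x - unitV d i, i))
              - vM x * (a (x, i) * dGrad u (x, i))) := by
          refine tsum_congr (fun x => ?_)
          rw [tsum_fintype]
          exact hA x
      _ = ∑' p : Edge d,
            (vM p.1 * (a (p.1 - unitV d p.2, p.2) * dGrad u (p.1 - unitV d p.2, p.2))
              - vM p.1 * (a p * dGrad u p)) := by
          exact (hSum.tsum_prod' (fun x => Summable.of_finite)).symm
      _ = (∑' p : Edge d,
            vM p.1 * (a (p.1 - unitV d p.2, p.2) * dGrad u (p.1 - unitV d p.2, p.2)))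
          - ∑' p : Edge d, vM p.1 * (a p * dGrad u p) := T1'.tsum_sub T2
      _ = (∑' e : Edge d, vM (e.1 + unitV d e.2) * (a e * dGrad u e))
          - ∑' e : Edge d, vM e.1 * (a e * dGrad u e) := by
          rw [hfun, Function.comp_def]
          congr 1
          exact (edgeShiftEquiv d).symm.tsum_eq
            (fun e : Edge d => vM (e.1 + unitV d e.2) * (a e * dGrad u e))
      _ = ∑' e : Edge d, (vM (e.1 + unitV d e.2) * (a e * dGrad u e)
            - vM e.1 * (a e * dGrad u e)) := (T1.tsum_sub T2).symm
      _ = ∑' e : Edge d, dGrad vM e * (a e * dGrad u e) := by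
          refine tsum_congr (fun e => ?_)
          simp only [dGrad]
          ring
  refine ⟨S1, Svf, ?_, ?_⟩
  · rw [key, ← tsum_mul_left]
    refine Summable.tsum_le_tsum (fun e => ?_) (S1.mul_left lam) T3
    have hq := hsq e
    have h0 : 0 ≤ dGrad vM e * dGrad u e := le_trans (sq_nonneg _) hq
    have hae := ha e
    nlinarith [hlam.1, hae.1, hae.2]
  · have : M * (∑' x : V d, |f x|) = ∑' x : V d, M * |f x| := tsum_mul_left.symm
    rw [this]
    refine Summable.tsum_le_tsum (fun x => ?_) Svf (hf.mul_left M)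
    calc vM x * f x ≤ |vM x * f x| := le_abs_self _
      _ = |vM x| * |f x| := abs_mul _ _
      _ ≤ M * |f x| := mul_le_mul_of_nonneg_right (hvMabs x) (abs_nonneg _)
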